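/- Let h be a symmetric bilinear form on a real vector space V and B ∈ V with δ := 1 − h(B,B) ≠ 0. Define W = −B/δ and the symmetric bilinear form g(u,u') = δ·(h(u,u') − h(B,u)·h(B,u')). Let ε ∈ {1,−1} and let v ∈ V satisfy h(v,v) > 0 and R := ε·√(h(v,v)) + h(B,v) > 0. Then g(v/R − W, v/R − W) = 1; that is, the pseudo-Randers metric R_ε(v) = ε·√(h(v,v)) + h(B,v) is the translation of the indicatrix of g by the vector W. -/

import Mathlib

/-- A pseudo-Randers metric `R_ε(v) = ε√(h(v,v)) + h(B,v)` (with `δ := 1 − h(B,B) ≠ 0`)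
is the translation by the vector `W = −B/δ` of the semi-Riemannian metric
`g(u,u') = δ(h(u,u') − h(B,u)h(B,u'))`: one has `g(v/R − W, v/R − W) = 1`. -/
theorem stmt5 {V : Type*} [AddCommGroup V] [Module ℝ V]
    (h : V →ₗ[ℝ] V →ₗ[ℝ] ℝ) (hhsym : ∀ x y : V, h x y = h y x) (B : V)
    (δ : ℝ) (hδdef : δ = 1 - h B B) (hδ : δ ≠ 0)
    (W : V) (hW : W = -(δ⁻¹ • B))
    (g : V → V → ℝ) (hg : ∀ u u' : V, g u u' = δ * (h u u' - h B u * h B u'))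
    (ε : ℝ) (hε : ε = 1 ∨ ε = -1)
    (v : V) (hv : 0 < h v v)
    (R : ℝ) (hR : R = ε * Real.sqrt (h v v) + h B v) (hRpos : 0 < R) :
    g (R⁻¹ • v - W) (R⁻¹ • v - W) = 1 := by
  have hε2 : ε ^ 2 = 1 := by rcases hε with rfl | rfl <;> norm_num
  have hR0 : R ≠ 0 := ne_of_gt hRpos
  set s : ℝ := Real.sqrt (h v v) with hs
  have hs2 : s ^ 2 = h v v := Real.sq_sqrt hv.le
  rw [hg, hW]
  simp only [sub_neg_eq_add, map_add, map_smul, LinearMap.add_apply,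
    LinearMap.smul_apply, smul_eq_mul]
  rw [hhsym v B]
  set a : ℝ := h v v
  set b : ℝ := h B v
  set c : ℝ := h B B
  have hR2 : R ^ 2 = a - b ^ 2 + 2 * b * R := by
    rw [hR]; nlinarith [hs2, hε2]
  have hc : c = 1 - δ := by rw [hδdef]; ring
  field_simp
  linear_combination (-2*δ*R*b - R^2*c + δ*R^2) * hc + (-(δ^2)) * hR2
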